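/- Let A, B ∈ ℝ^{n×n} be such that the multisets of diagonal entries of A and B agree and the multisets of off-diagonal entries agree. Fix t ∈ ℝ with t ≠ a_{ij} − a_{kk} for all i ≠ j and all k. Then B = PAPᵀ for some permutation matrix P if and only if B + tI = P(A + tI)Qᵀ for some permutation matrices P, Q. -/

import Mathlib

open Matrix Finset

lemma perm_mul_mul_perm_entry (n : ℕ) (σ τ : Equiv.Perm (Fin n))
    (M : Matrix (Fin n) (Fin n) ℝ) (i j : Fin n) :
    (σ.permMatrix ℝ * M * (τ.permMatrix ℝ)ᵀ) i j = M (σ i) (τ j) := by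
  simp [Matrix.mul_apply, Equiv.Perm.permMatrix, PEquiv.toMatrix_apply,
    Equiv.toPEquiv_apply, Finset.sum_ite_eq, mul_comm]
  simp [Equiv.symm_apply_eq]

/-- Under the multiset conditions on diagonal and off-diagonal entries, and for `t`
avoiding all differences `a_{ij} - a_{kk}` (`i ≠ j`), permutational similarity of `A`
and `B` is equivalent to `B + tI = P(A + tI)Qᵀ` for permutation matrices `P, Q`. -/
theorem perm_similar_iff_shifted_perm_equiv (n : ℕ) (A B : Matrix (Fin n) (Fin n) ℝ) (t : ℝ)
    (hdiag : (Finset.univ.val.map fun i : Fin n => A i i) =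
             (Finset.univ.val.map fun i : Fin n => B i i))
    (hoff : ((Finset.univ.filter fun p : Fin n × Fin n => p.1 ≠ p.2).val.map
               fun p => A p.1 p.2) =
            ((Finset.univ.filter fun p : Fin n × Fin n => p.1 ≠ p.2).val.map
               fun p => B p.1 p.2))
    (ht : ∀ i j k : Fin n, i ≠ j → t ≠ A i j - A k k) :
    (∃ P : Equiv.Perm (Fin n), B = P.permMatrix ℝ * A * (P.permMatrix ℝ)ᵀ) ↔
    (∃ P Q : Equiv.Perm (Fin n),
      B + t • 1 = P.permMatrix ℝ * (A + t • 1) * (Q.permMatrix ℝ)ᵀ) := by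
  constructor
  · rintro ⟨P, rfl⟩
    refine ⟨P, P, ?_⟩
    ext i j
    rw [perm_mul_mul_perm_entry]
    simp only [Matrix.add_apply, Matrix.smul_apply, Matrix.one_apply, smul_eq_mul]
    rw [perm_mul_mul_perm_entry]
    congr 2
    simp [P.injective.eq_iff]
  · rintro ⟨P, Q, hPQ⟩
    -- entrywise version of the hypothesis
    have h : ∀ i j, B i j + t * (if i = j then 1 else 0)
        = A (P i) (Q j) + t * (if P i = Q j then 1 else 0) := by
      intro i j
      have := congrFun (congrFun hPQ i) j
      rw [perm_mul_mul_perm_entry] at this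
      simpa [Matrix.one_apply] using this
    -- each B i i is some diagonal entry of A
    have hmem : ∀ i : Fin n, ∃ k : Fin n, A k k = B i i := by
      intro i
      have : B i i ∈ (Finset.univ.val.map fun i : Fin n => B i i) := by
        exact Multiset.mem_map.mpr ⟨i, Finset.mem_univ_val i, rfl⟩
      rw [← hdiag] at this
      obtain ⟨k, _, hk⟩ := Multiset.mem_map.mp this
      exact ⟨k, hk⟩
    -- P = Q
    have hPQeq : ∀ i, P i = Q i := by
      intro i
      by_contra hne
      have hi := h i i
      simp [hne] at hi
      obtain ⟨k, hk⟩ := hmem i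
      have hne' : P i ≠ Q i := hne
      exact ht (P i) (Q i) k hne' (by linarith)
    refine ⟨P, ?_⟩
    ext i j
    rw [perm_mul_mul_perm_entry]
    have hij := h i j
    rw [← hPQeq j] at hij
    have : (if i = j then (1:ℝ) else 0) = (if P i = P j then 1 else 0) := by
      simp [P.injective.eq_iff]
    rw [this] at hij
    linarith
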